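/- arXiv:2204.08439 — 2 statements merged into one kernel-verified Lean document; each statement's English description precedes it below -/
import Mathlib

section
/- Let p be a supported-below probability distribution on ℤ with finite second moment Σ_n n²·p(n) < ∞. Then for every λ ≥ 0 with P_λ ≻_a p one has λ ≥ Var(p), and for every λ ≥ 0 with p ≻_a P_λ one has Var(p) ≥ λ. Consequently F_max(p) ≥ 4·Var(p) ≥ F_min(p). -/
/-- Convolution of two sequences on `ℤ`: `(a*b)(n) = ∑_{k∈ℤ} a(k)·b(n−k)`.
For supported-below sequences this `tsum` has finitely many nonzero terms. -/
noncomputable def conv (a b : ℤ → ℝ) : ℤ → ℝ := fun n => ∑' k : ℤ, a k * b (n - k)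

/-- A sequence is supported below if it vanishes for all sufficiently negative indices. -/
def SuppBelow (a : ℤ → ℝ) : Prop := ∃ N : ℤ, ∀ n : ℤ, n < N → a n = 0

/-- A probability distribution on `ℤ`: nonnegative with total sum 1. -/
def IsProbDist (p : ℤ → ℝ) : Prop := (∀ n : ℤ, 0 ≤ p n) ∧ HasSum p 1

/-- `qt` is the reciprocal sequence `q̃` of `q`, relative to `nstar = n_*(q)`,
the least index where `q` is positive: `q̃` vanishes below `−n_*(q)` and
`(q̃*q)(n) = δ_{n,0}` for all `n`. -/
def IsRecip (q qt : ℤ → ℝ) (nstar : ℤ) : Prop :=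
  IsLeast {n : ℤ | 0 < q n} nstar ∧ (∀ n : ℤ, n < -nstar → qt n = 0) ∧
  (∀ n : ℤ, conv qt q n = if n = 0 then (1 : ℝ) else 0)

/-- The generalized Poisson sequence `P_λ : ℤ → ℝ`,
`P_λ(n) = e^{−λ}·λ^n/n!` for `n ≥ 0` and `P_λ(n) = 0` for `n < 0`. -/
noncomputable def poisson (lam : ℝ) : ℤ → ℝ :=
  fun n => if 0 ≤ n then Real.exp (-lam) * lam ^ n.toNat / (Nat.factorial n.toNat : ℝ) else 0

/-- The max-QFI `F_max(p) = inf{4λ | λ ≥ 0, P_λ ≻_a p} ∈ [0,∞]` (with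
`inf ∅ = ∞`).  Since `P_λ ≻_a p` means `(P_λ * p̃)(n) ≥ 0` for all `n`, it is
expressed through the reciprocal sequence `pt = p̃` of `p`. -/
noncomputable def Fmax (pt : ℤ → ℝ) : ENNReal :=
  sInf {x : ENNReal | ∃ lam : ℝ, 0 ≤ lam ∧
    (∀ n : ℤ, 0 ≤ conv (poisson lam) pt n) ∧ x = ENNReal.ofReal (4 * lam)}

/-- The min-QFI `F_min(p) = sup{4λ | λ ≥ 0, p ≻_a P_λ} ∈ [0,∞]`.  Since
`P̃_λ = P_{−λ}`, the condition `p ≻_a P_λ` reads `(p * P_{−λ})(n) ≥ 0`. -/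
noncomputable def Fmin (p : ℤ → ℝ) : ENNReal :=
  sSup {x : ENNReal | ∃ lam : ℝ, 0 ≤ lam ∧
    (∀ n : ℤ, 0 ≤ conv p (poisson (-lam)) n) ∧ x = ENNReal.ofReal (4 * lam)}

/-- Mean `μ_p = ∑_n n·p(n)` of a distribution on `ℤ`. -/
noncomputable def mean (p : ℤ → ℝ) : ℝ := ∑' n : ℤ, (n : ℝ) * p n

/-- Variance `Var(p) = ∑_n (n − μ_p)²·p(n)` of a distribution on `ℤ`. -/
noncomputable def variance (p : ℤ → ℝ) : ℝ := ∑' n : ℤ, ((n : ℝ) - mean p) ^ 2 * p n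

lemma hasSum_int_of_nat {f : ℤ → ℝ} (hf : ∀ n : ℤ, n < 0 → f n = 0) {a : ℝ}
    (h : HasSum (fun n : ℕ => f (n : ℤ)) a) : HasSum f a := by
  have hi : Function.Injective (fun n : ℕ => (n : ℤ)) := fun a b hab => by
    simpa using hab
  exact (Function.Injective.hasSum_iff hi (by
    intro x hx
    apply hf
    by_contra hc
    push_neg at hc
    exact hx ⟨x.toNat, by simpa using Int.toNat_of_nonneg hc⟩)).mp h

lemma conv_term_summable {a b : ℤ → ℝ} (ha : SuppBelow a) (hb : SuppBelow b) (n : ℤ) :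
    Summable fun k => a k * b (n - k) := by
  obtain ⟨Na, hNa⟩ := ha; obtain ⟨Nb, hNb⟩ := hb
  apply summable_of_ne_finset_zero (s := Finset.Icc Na (n - Nb))
  intro k hk
  rw [Finset.mem_Icc, not_and_or, not_le, not_le] at hk
  rcases hk with h | h
  · rw [hNa k h, zero_mul]
  · rw [hNb _ (by omega), mul_zero]

lemma suppBelow_conv {a b : ℤ → ℝ} (ha : SuppBelow a) (hb : SuppBelow b) :
    SuppBelow (conv a b) := by
  obtain ⟨Na, hNa⟩ := ha; obtain ⟨Nb, hNb⟩ := hb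
  refine ⟨Na + Nb, fun n hn => ?_⟩
  have : ∀ k : ℤ, a k * b (n - k) = 0 := by
    intro k
    rcases lt_or_ge k Na with h | h
    · rw [hNa k h, zero_mul]
    · rw [hNb _ (by omega), mul_zero]
  simp only [conv]
  rw [tsum_congr this, tsum_zero]

lemma conv_delta (a : ℤ → ℝ) : conv a (fun n => if n = 0 then (1:ℝ) else 0) = a := by
  funext n
  simp only [conv]
  rw [tsum_eq_single n]
  · simp
  · intro k hk
    rw [if_neg (by omega), mul_zero]

def swapAdd : ℤ × ℤ ≃ ℤ × ℤ where
  toFun q := (q.2, q.1 - q.2)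
  invFun q := (q.1 + q.2, q.1)
  left_inv := by intro q; simp
  right_inv := by intro q; simp

lemma hasSum_mul_conv {a b f : ℤ → ℝ} {V : ℝ}
    (hF : HasSum (fun q : ℤ × ℤ => f (q.1 + q.2) * (a q.1 * b q.2)) V) :
    HasSum (fun n => f n * conv a b n) V := by
  set F : ℤ × ℤ → ℝ := fun q => f (q.1 + q.2) * (a q.1 * b q.2) with hFdef
  have hG : Summable (fun q : ℤ × ℤ => F (swapAdd q)) :=
    (Equiv.summable_iff swapAdd).mpr hF.summable
  have hfib : ∀ n : ℤ, HasSum (fun k => F (swapAdd (n, k))) (f n * conv a b n) := by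
    intro n
    have h1 : HasSum (fun k => F (swapAdd (n, k))) (∑' k, F (swapAdd (n, k))) :=
      (hG.prod_factor n).hasSum
    have h2 : (fun k : ℤ => F (swapAdd (n, k))) = fun k => f n * (a k * b (n - k)) := by
      funext k
      show f (k + (n - k)) * (a k * b (n - k)) = _
      rw [show k + (n - k) = n by ring]
    rw [h2] at h1 ⊢
    rwa [tsum_mul_left] at h1
  have := HasSum.prod_fiberwise hG.hasSum hfib
  rwa [Equiv.tsum_eq swapAdd F, hF.tsum_eq] at this

lemma conv_assoc {a b c : ℤ → ℝ} (ha : SuppBelow a) (hb : SuppBelow b) (hc : SuppBelow c) :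
    conv (conv a b) c = conv a (conv b c) := by
  obtain ⟨Na, hNa⟩ := ha; obtain ⟨Nb, hNb⟩ := hb; obtain ⟨Nc, hNc⟩ := hc
  funext n
  set F : ℤ × ℤ → ℝ := fun q => a q.1 * (b q.2 * c (n - q.1 - q.2)) with hFdef
  have hF : Summable F := by
    apply summable_of_ne_finset_zero
      (s := Finset.Icc Na (n - Nb - Nc) ×ˢ Finset.Icc Nb (n - Na - Nc))
    intro q hq
    rw [Finset.mem_product, Finset.mem_Icc, Finset.mem_Icc] at hq
    show a q.1 * (b q.2 * c (n - q.1 - q.2)) = 0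
    rcases lt_or_ge q.1 Na with h | h
    · rw [hNa _ h, zero_mul]
    rcases lt_or_ge q.2 Nb with h2 | h2
    · rw [hNb _ h2, zero_mul, mul_zero]
    rcases lt_or_ge (n - q.1 - q.2) Nc with h3 | h3
    · rw [hNc _ h3, mul_zero, mul_zero]
    exact absurd ⟨⟨h, by omega⟩, h2, by omega⟩ hq
  have hG : Summable (fun q : ℤ × ℤ => F (swapAdd q)) :=
    (Equiv.summable_iff swapAdd).mpr hF
  have hrhs : conv a (conv b c) n = ∑' q, F q := by
    rw [Summable.tsum_prod hF]
    simp only [conv]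
    apply tsum_congr; intro i
    rw [← tsum_mul_left]
  have hlhs : conv (conv a b) c n = ∑' q, F q := by
    rw [← Equiv.tsum_eq swapAdd F, Summable.tsum_prod hG]
    simp only [conv]
    apply tsum_congr; intro k
    rw [← tsum_mul_right]
    apply tsum_congr; intro i
    show a i * b (k - i) * c (n - k) = a i * (b (k - i) * c (n - i - (k - i)))
    rw [show n - i - (k - i) = n - k by ring, mul_assoc]
  rw [hlhs, hrhs]

lemma expsum (x : ℝ) : HasSum (fun n : ℕ => x ^ n / (Nat.factorial n : ℝ)) (Real.exp x) := by
  rw [Real.exp_eq_exp_ℝ]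
  exact NormedSpace.expSeries_div_hasSum_exp x

lemma factsucc (n : ℕ) : (Nat.factorial (n+1) : ℝ) = ((n:ℝ)+1) * (Nat.factorial n : ℝ) := by
  rw [Nat.factorial_succ]; push_cast; ring

lemma expsum1 (x : ℝ) : HasSum (fun n : ℕ => (n : ℝ) * (x ^ n / (Nat.factorial n : ℝ)))
    (x * Real.exp x) := by
  set f : ℕ → ℝ := fun n => (n : ℝ) * (x ^ n / (Nat.factorial n : ℝ)) with hf
  have key : HasSum (fun n : ℕ => f (n + 1)) (x * Real.exp x) := by
    apply ((expsum x).mul_left x).congr_fun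
    intro n
    show f (n+1) = x * (x ^ n / (Nat.factorial n : ℝ))
    simp only [hf]
    rw [factsucc]
    have h0 : (Nat.factorial n : ℝ) ≠ 0 := Nat.cast_ne_zero.mpr (Nat.factorial_ne_zero n)
    have h1 : ((n : ℝ) + 1) ≠ 0 := by positivity
    push_cast
    field_simp
    ring
  have := (hasSum_nat_add_iff 1).mp key
  simpa [hf] using this

lemma expsum2 (x : ℝ) : HasSum (fun n : ℕ => (n : ℝ)^2 * (x ^ n / (Nat.factorial n : ℝ)))
    (x^2 * Real.exp x + x * Real.exp x) := by
  set f : ℕ → ℝ := fun n => (n : ℝ)^2 * (x ^ n / (Nat.factorial n : ℝ)) with hf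
  have key : HasSum (fun n : ℕ => f (n + 1)) (x^2 * Real.exp x + x * Real.exp x) := by
    have h := ((expsum1 x).mul_left x).add ((expsum x).mul_left x)
    have hval : x * (x * Real.exp x) + x * Real.exp x = x^2 * Real.exp x + x * Real.exp x := by ring
    rw [hval] at h
    apply h.congr_fun
    intro n
    show f (n+1) = x * ((n:ℝ) * (x ^ n / (Nat.factorial n : ℝ))) + x * (x ^ n / (Nat.factorial n : ℝ))
    simp only [hf]
    rw [factsucc]
    have h0 : (Nat.factorial n : ℝ) ≠ 0 := Nat.cast_ne_zero.mpr (Nat.factorial_ne_zero n)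
    have h1 : ((n : ℝ) + 1) ≠ 0 := by positivity
    push_cast
    field_simp
    ring
  have := (hasSum_nat_add_iff 1).mp key
  simpa [hf] using this

lemma poisson_nat (lam : ℝ) (n : ℕ) :
    poisson lam (n : ℤ) = Real.exp (-lam) * (lam ^ n / (Nat.factorial n : ℝ)) := by
  simp [poisson]; ring

lemma poisson_neg (lam : ℝ) {n : ℤ} (hn : n < 0) : poisson lam n = 0 := by
  simp [poisson, not_le.mpr hn]

lemma poisson_nonneg {lam : ℝ} (hl : 0 ≤ lam) (n : ℤ) : 0 ≤ poisson lam n := by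
  unfold poisson
  split
  · positivity
  · exact le_rfl

lemma poisson_suppBelow (lam : ℝ) : ∃ N : ℤ, ∀ n : ℤ, n < N → poisson lam n = 0 :=
  ⟨0, fun n hn => poisson_neg lam hn⟩

lemma exp_cancel (lam c : ℝ) : Real.exp (-lam) * (c * Real.exp lam) = c := by
  rw [show Real.exp (-lam) * (c * Real.exp lam) = c * (Real.exp (-lam) * Real.exp lam) by ring,
    ← Real.exp_add]
  simp

lemma poisson_hasSum (lam : ℝ) : HasSum (poisson lam) 1 := by
  apply hasSum_int_of_nat (fun n hn => poisson_neg lam hn)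
  have h := (expsum lam).mul_left (Real.exp (-lam))
  rw [show Real.exp (-lam) * Real.exp lam = 1 by
    rw [← Real.exp_add]; simp] at h
  exact h.congr_fun fun n => (poisson_nat lam n)

lemma poisson_hasSum_mean (lam : ℝ) : HasSum (fun n : ℤ => (n : ℝ) * poisson lam n) lam := by
  apply hasSum_int_of_nat (fun n hn => by rw [poisson_neg lam hn, mul_zero])
  have h := (expsum1 lam).mul_left (Real.exp (-lam))
  rw [exp_cancel] at h
  apply h.congr_fun
  intro n
  rw [poisson_nat]
  push_cast
  ring

lemma poisson_hasSum_sq (lam : ℝ) :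
    HasSum (fun n : ℤ => (n : ℝ)^2 * poisson lam n) (lam^2 + lam) := by
  apply hasSum_int_of_nat (fun n hn => by rw [poisson_neg lam hn, mul_zero])
  have h := (expsum2 lam).mul_left (Real.exp (-lam))
  rw [show Real.exp (-lam) * (lam^2 * Real.exp lam + lam * Real.exp lam)
      = Real.exp (-lam) * ((lam^2 + lam) * Real.exp lam) by ring, exp_cancel] at h
  apply h.congr_fun
  intro n
  rw [poisson_nat]
  push_cast
  ring

lemma mean_poisson (lam : ℝ) : mean (poisson lam) = lam := (poisson_hasSum_mean lam).tsum_eq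

lemma poisson_hasSum_var (lam : ℝ) :
    HasSum (fun n : ℤ => ((n : ℝ) - lam)^2 * poisson lam n) lam := by
  have h := ((poisson_hasSum_sq lam).sub ((poisson_hasSum_mean lam).mul_left (2*lam))).add
    ((poisson_hasSum lam).mul_left (lam^2))
  rw [show lam^2 + lam - 2*lam*lam + lam^2 * 1 = lam by ring] at h
  apply h.congr_fun
  intro n
  show ((n : ℝ) - lam)^2 * poisson lam n
    = (n:ℝ)^2 * poisson lam n - 2*lam*((n:ℝ) * poisson lam n) + lam^2 * poisson lam n
  ring

lemma variance_poisson (lam : ℝ) : variance (poisson lam) = lam := by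
  unfold variance
  rw [mean_poisson]
  exact (poisson_hasSum_var lam).tsum_eq

lemma poisson_conv (x y : ℝ) : conv (poisson x) (poisson y) = poisson (x + y) := by
  funext n
  have key : HasSum (fun k : ℤ => poisson x k * poisson y (n - k)) (poisson (x+y) n) := by
    apply hasSum_int_of_nat (fun k hk => by rw [poisson_neg x hk, zero_mul])
    rcases lt_or_ge n 0 with hn | hn
    · have : ∀ k : ℕ, poisson x (k : ℤ) * poisson y (n - k) = 0 := fun k => by
        rw [poisson_neg y (by omega), mul_zero]
      rw [show poisson (x+y) n = 0 from poisson_neg _ hn]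
      exact (hasSum_zero.congr_fun fun k => this k)
    · set N := n.toNat with hN
      have hnN : (N : ℤ) = n := Int.toNat_of_nonneg hn
      have hsupp : ∀ k : ℕ, k ∉ Finset.range (N + 1) → poisson x (k : ℤ) * poisson y (n - k) = 0 := by
        intro k hk
        rw [Finset.mem_range, not_lt] at hk
        rw [poisson_neg y (by omega), mul_zero]
      have h := hasSum_sum_of_ne_finset_zero (L := SummationFilter.unconditional ℕ) hsupp
      convert h using 1
      have hterm : ∀ k ∈ Finset.range (N + 1),
          poisson x (k : ℤ) * poisson y (n - k)
          = Real.exp (-(x+y)) / (Nat.factorial N : ℝ)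
            * (x ^ k * y ^ (N - k) * (N.choose k : ℝ)) := by
        intro k hk
        rw [Finset.mem_range] at hk
        have hkN : k ≤ N := by omega
        have h1 : n - (k : ℤ) = ((N - k : ℕ) : ℤ) := by omega
        rw [poisson_nat, h1, poisson_nat]
        have hfac : (N.choose k : ℝ) * (Nat.factorial k : ℝ) * (Nat.factorial (N - k) : ℝ)
            = (Nat.factorial N : ℝ) := by
          rw [← Nat.cast_mul, ← Nat.cast_mul, Nat.choose_mul_factorial_mul_factorial hkN]
        have hk0 : (Nat.factorial k : ℝ) ≠ 0 := Nat.cast_ne_zero.mpr (Nat.factorial_ne_zero _)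
        have hk1 : (Nat.factorial (N - k) : ℝ) ≠ 0 := Nat.cast_ne_zero.mpr (Nat.factorial_ne_zero _)
        have hk2 : (Nat.factorial N : ℝ) ≠ 0 := Nat.cast_ne_zero.mpr (Nat.factorial_ne_zero _)
        rw [show Real.exp (-(x+y)) = Real.exp (-x) * Real.exp (-y) by
          rw [← Real.exp_add]; ring_nf]
        field_simp
        rw [← hfac]
        ring
      rw [Finset.sum_congr rfl hterm, ← Finset.mul_sum, ← add_pow]
      show poisson (x+y) n = _
      rw [← hnN, poisson_nat]
      ring
  exact key.tsum_eq

lemma poisson_zero : poisson 0 = (fun n : ℤ => if n = 0 then (1:ℝ) else 0) := by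
  funext n
  unfold poisson
  rcases lt_trichotomy n 0 with h | h | h
  · rw [if_neg (by omega), if_neg (by omega)]
  · subst h; simp
  · rw [if_pos (by omega), if_neg (by omega)]
    have : n.toNat ≠ 0 := by omega
    rw [zero_pow this]
    simp

-- weighted summability helpers
lemma abs_wt_summable {a : ℤ → ℝ} (ha0 : ∀ n, 0 ≤ a n) (haS : Summable a)
    (ha2 : Summable fun n : ℤ => (n:ℝ)^2 * a n) (c : ℝ) :
    Summable (fun n : ℤ => |((n:ℝ) - c)| * a n) := by
  apply Summable.of_nonneg_of_le (fun n => mul_nonneg (abs_nonneg _) (ha0 n))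
    (f := fun n : ℤ => (1 + 2*c^2) * a n + 2 * ((n:ℝ)^2 * a n))
  · intro n
    have h1 : |((n:ℝ) - c)| ≤ 1 + ((n:ℝ) - c)^2 := by
      nlinarith [sq_nonneg (|((n:ℝ) - c)| - 1), abs_nonneg ((n:ℝ) - c), sq_abs ((n:ℝ) - c)]
    have h2 : ((n:ℝ) - c)^2 ≤ 2*(n:ℝ)^2 + 2*c^2 := by nlinarith [sq_nonneg ((n:ℝ) + c)]
    have := ha0 n
    nlinarith
  · exact ((haS.mul_left _).add (ha2.mul_left 2))

lemma wt_summable {a : ℤ → ℝ} (ha0 : ∀ n, 0 ≤ a n) (haS : Summable a)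
    (ha2 : Summable fun n : ℤ => (n:ℝ)^2 * a n) (c : ℝ) :
    Summable (fun n : ℤ => ((n:ℝ) - c) * a n) := by
  rw [← summable_abs_iff]
  apply (abs_wt_summable ha0 haS ha2 c).congr
  intro n
  rw [abs_mul, abs_of_nonneg (ha0 n)]

lemma wt2_summable {a : ℤ → ℝ} (ha0 : ∀ n, 0 ≤ a n) (haS : Summable a)
    (ha2 : Summable fun n : ℤ => (n:ℝ)^2 * a n) (c : ℝ) :
    Summable (fun n : ℤ => ((n:ℝ) - c)^2 * a n) := by
  apply Summable.of_nonneg_of_le (fun n => mul_nonneg (sq_nonneg _) (ha0 n))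
    (f := fun n : ℤ => 2*c^2 * a n + 2 * ((n:ℝ)^2 * a n))
  · intro n
    have h2 : ((n:ℝ) - c)^2 ≤ 2*(n:ℝ)^2 + 2*c^2 := by nlinarith [sq_nonneg ((n:ℝ) + c)]
    have := ha0 n
    nlinarith
  · exact ((haS.mul_left _).add (ha2.mul_left 2))

lemma prodsum {u v : ℤ → ℝ} (hu : Summable (fun n => |u n|)) (hv : Summable (fun n => |v n|)) :
    Summable (fun q : ℤ × ℤ => u q.1 * v q.2) := by
  have hu' : Summable (fun n => ‖u n‖) := hu.congr fun n => (Real.norm_eq_abs _).symm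
  have hv' : Summable (fun n => ‖v n‖) := hv.congr fun n => (Real.norm_eq_abs _).symm
  exact (hu'.mul_norm hv').of_norm

set_option maxHeartbeats 2000000 in
lemma conv_stats {a b : ℤ → ℝ} (ha0 : ∀ n, 0 ≤ a n) (hb0 : ∀ n, 0 ≤ b n)
    (ha1 : HasSum a 1) (hb1 : HasSum b 1)
    (ha2 : Summable fun n : ℤ => (n:ℝ)^2 * a n) (hb2 : Summable fun n : ℤ => (n:ℝ)^2 * b n) :
    HasSum (conv a b) 1 ∧ mean (conv a b) = mean a + mean b ∧
      variance (conv a b) = variance a + variance b := by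
  set μa := mean a with hμa
  set μb := mean b with hμb
  have haS := ha1.summable
  have hbS := hb1.summable
  -- centered first moments
  have hma : HasSum (fun n : ℤ => ((n:ℝ) - μa) * a n) 0 := by
    have h1 : HasSum (fun n : ℤ => (n:ℝ) * a n) μa :=
      (wt_summable ha0 haS ha2 0).congr (by intro n; ring) |>.hasSum
    have h := h1.sub (ha1.mul_left μa)
    rw [show μa - μa * 1 = 0 by ring] at h
    exact h.congr_fun fun n => by ring
  have hmb : HasSum (fun n : ℤ => ((n:ℝ) - μb) * b n) 0 := by
    have h1 : HasSum (fun n : ℤ => (n:ℝ) * b n) μb :=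
      (wt_summable hb0 hbS hb2 0).congr (by intro n; ring) |>.hasSum
    have h := h1.sub (hb1.mul_left μb)
    rw [show μb - μb * 1 = 0 by ring] at h
    exact h.congr_fun fun n => by ring
  have hva : HasSum (fun n : ℤ => ((n:ℝ) - μa)^2 * a n) (variance a) :=
    (wt2_summable ha0 haS ha2 μa).hasSum
  have hvb : HasSum (fun n : ℤ => ((n:ℝ) - μb)^2 * b n) (variance b) :=
    (wt2_summable hb0 hbS hb2 μb).hasSum
  -- abs summabilities
  have absa : Summable (fun n : ℤ => |a n|) := summable_abs_iff.mpr haS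
  have absb : Summable (fun n : ℤ => |b n|) := summable_abs_iff.mpr hbS
  have habs_ma : Summable (fun n : ℤ => |(((n:ℝ) - μa) * a n)|) :=
    (abs_wt_summable ha0 haS ha2 μa).congr fun n => by rw [abs_mul, abs_of_nonneg (ha0 n)]
  have habs_mb : Summable (fun n : ℤ => |(((n:ℝ) - μb) * b n)|) :=
    (abs_wt_summable hb0 hbS hb2 μb).congr fun n => by rw [abs_mul, abs_of_nonneg (hb0 n)]
  have habs_va : Summable (fun n : ℤ => |(((n:ℝ) - μa)^2 * a n)|) :=
    (wt2_summable ha0 haS ha2 μa).congr fun n => by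
      rw [abs_mul, abs_of_nonneg (sq_nonneg _), abs_of_nonneg (ha0 n)]
  have habs_vb : Summable (fun n : ℤ => |(((n:ℝ) - μb)^2 * b n)|) :=
    (wt2_summable hb0 hbS hb2 μb).congr fun n => by
      rw [abs_mul, abs_of_nonneg (sq_nonneg _), abs_of_nonneg (hb0 n)]
  -- total mass
  have hsum1 : HasSum (conv a b) 1 := by
    have hF : HasSum (fun q : ℤ × ℤ => a q.1 * b q.2) 1 := by
      have := ha1.mul hb1 (prodsum absa absb)
      rwa [one_mul] at this
    have h := hasSum_mul_conv (f := fun _ => 1) (hF.congr_fun fun q => one_mul _)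
    exact h.congr_fun fun n => (one_mul (conv a b n)).symm
  -- mean
  have hmean : HasSum (fun n : ℤ => (n:ℝ) * conv a b n) (μa + μb) := by
    -- F q = (q1+q2) * (a q1 * b q2) = ((q1-μa) a q1) b q2 + a q1 ((q2-μb) b q2) + (μa+μb)(a q1 b q2)
    have hA : HasSum (fun q : ℤ × ℤ => (((q.1:ℝ) - μa) * a q.1) * b q.2) 0 := by
      have := hma.mul hb1 (prodsum habs_ma absb)
      rwa [zero_mul] at this
    have hB : HasSum (fun q : ℤ × ℤ => a q.1 * (((q.2:ℝ) - μb) * b q.2)) 0 := by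
      have := ha1.mul hmb (prodsum absa habs_mb)
      rwa [mul_zero] at this
    have hC : HasSum (fun q : ℤ × ℤ => (μa + μb) * (a q.1 * b q.2)) (μa + μb) := by
      have h1 : HasSum (fun q : ℤ × ℤ => a q.1 * b q.2) 1 := by
        have := ha1.mul hb1 (prodsum absa absb)
        rwa [one_mul] at this
      have := h1.mul_left (μa + μb)
      rwa [mul_one] at this
    have hF := (hA.add hB).add hC
    rw [show (0:ℝ) + 0 + (μa + μb) = μa + μb by ring] at hF
    have hF' : HasSum (fun q : ℤ × ℤ => ((q.1 + q.2 : ℤ):ℝ) * (a q.1 * b q.2)) (μa + μb) := by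
      apply hF.congr_fun
      intro q
      push_cast
      ring
    exact hasSum_mul_conv (f := fun n : ℤ => (n:ℝ)) hF'
  have hmean_eq : mean (conv a b) = μa + μb := hmean.tsum_eq
  refine ⟨hsum1, hmean_eq, ?_⟩
  -- variance
  have hvar : HasSum (fun n : ℤ => ((n:ℝ) - (μa + μb))^2 * conv a b n)
      (variance a + variance b) := by
    have hA : HasSum (fun q : ℤ × ℤ => (((q.1:ℝ) - μa)^2 * a q.1) * b q.2) (variance a) := by
      have := hva.mul hb1 (prodsum habs_va absb)
      rwa [mul_one] at this
    have hC : HasSum (fun q : ℤ × ℤ => a q.1 * (((q.2:ℝ) - μb)^2 * b q.2)) (variance b) := by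
      have := ha1.mul hvb (prodsum absa habs_vb)
      rwa [one_mul] at this
    have hB : HasSum (fun q : ℤ × ℤ => (((q.1:ℝ) - μa) * a q.1) * (((q.2:ℝ) - μb) * b q.2)) 0 := by
      have := hma.mul hmb (prodsum habs_ma habs_mb)
      rwa [zero_mul] at this
    have hF := (hA.add (hB.mul_left 2)).add hC
    rw [show variance a + 2 * 0 + variance b = variance a + variance b by ring] at hF
    have hF' : HasSum (fun q : ℤ × ℤ =>
        ((((q.1 + q.2 : ℤ)):ℝ) - (μa + μb))^2 * (a q.1 * b q.2)) (variance a + variance b) := by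
      apply hF.congr_fun
      intro q
      push_cast
      ring
    exact hasSum_mul_conv (f := fun n : ℤ => ((n:ℝ) - (μa + μb))^2) hF'
  unfold variance
  rw [hmean_eq, ← hμa, ← hμb]
  exact hvar.tsum_eq

lemma conv_le {r q : ℤ → ℝ} (hr : SuppBelow r) (hq : SuppBelow q) (hr0 : ∀ n, 0 ≤ r n)
    (hq0 : ∀ n, 0 ≤ q n) (n k : ℤ) : r k * q (n - k) ≤ conv r q n :=
  Summable.le_tsum (conv_term_summable hr hq n) k fun j _ => mul_nonneg (hr0 j) (hq0 _)

lemma moment_summable_of_le {r g : ℤ → ℝ} (hr0 : ∀ n, 0 ≤ r n) (C : ℝ) (m : ℤ)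
    (hle : ∀ n, r n ≤ C * g (n + m)) (hgS : Summable g)
    (hg2 : Summable fun n : ℤ => (n:ℝ)^2 * g n) :
    Summable r ∧ Summable (fun n : ℤ => (n:ℝ)^2 * r n) := by
  have hshift : Summable (fun n : ℤ => g (n + m)) := by
    have h := (Equiv.summable_iff (Equiv.addRight m) (f := g)).mpr hgS
    exact h.congr fun n => rfl
  have hshift2 : Summable (fun n : ℤ => (((n + m : ℤ)):ℝ)^2 * g (n + m)) := by
    have h := (Equiv.summable_iff (Equiv.addRight m)
      (f := fun n : ℤ => (n:ℝ)^2 * g n)).mpr hg2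
    exact h.congr fun n => rfl
  have hbig : Summable (fun n : ℤ => (1 + (n:ℝ)^2) * r n) := by
    apply Summable.of_nonneg_of_le
      (fun n => mul_nonneg (by positivity) (hr0 n))
      (f := fun n : ℤ => (C * (1 + 2*(m:ℝ)^2)) * g (n + m) + (2*C) * ((((n + m : ℤ)):ℝ)^2 * g (n + m)))
    · intro n
      have h1 := hle n
      have h2 : (n:ℝ)^2 ≤ 2*(((n + m : ℤ)):ℝ)^2 + 2*(m:ℝ)^2 := by
        push_cast
        nlinarith [sq_nonneg ((n:ℝ) + 2*(m:ℝ))]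
      have hr := hr0 n
      have hg : 0 ≤ C * g (n + m) := le_trans hr h1
      calc (1 + (n:ℝ)^2) * r n
          ≤ (1 + (n:ℝ)^2) * (C * g (n + m)) :=
            mul_le_mul_of_nonneg_left h1 (by positivity)
        _ ≤ (1 + (2*(((n + m : ℤ)):ℝ)^2 + 2*(m:ℝ)^2)) * (C * g (n + m)) :=
            mul_le_mul_of_nonneg_right (by linarith) hg
        _ = (C * (1 + 2*(m:ℝ)^2)) * g (n + m) + (2*C) * ((((n + m : ℤ)):ℝ)^2 * g (n + m)) := by
            ring
    · exact ((hshift.mul_left (C * (1 + 2*(m:ℝ)^2))).add (hshift2.mul_left (2*C)))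
  constructor
  · apply Summable.of_nonneg_of_le hr0 _ hbig
    intro n
    have := hr0 n
    have h := mul_le_mul_of_nonneg_right (by nlinarith [sq_nonneg (n:ℝ)] : (1:ℝ) ≤ 1 + (n:ℝ)^2) this
    linarith [h]
  · apply Summable.of_nonneg_of_le (fun n => mul_nonneg (sq_nonneg _) (hr0 n)) _ hbig
    intro n
    have := hr0 n
    have h := mul_le_mul_of_nonneg_right (by linarith [sq_nonneg (n:ℝ)] : ((n:ℝ)^2) ≤ 1 + (n:ℝ)^2) this
    linarith [h]

set_option maxHeartbeats 2000000 in
/-- for a supported-below probability distribution `p` on `ℤ`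
with finite second moment: every `λ ≥ 0` with `P_λ ≻_a p` satisfies
`λ ≥ Var(p)`, every `λ ≥ 0` with `p ≻_a P_λ` satisfies `Var(p) ≥ λ`, and
consequently `F_max(p) ≥ 4·Var(p) ≥ F_min(p)`. -/
theorem var_between_qfi (p pt : ℤ → ℝ) (np : ℤ)
    (hp : IsProbDist p) (hpb : SuppBelow p)
    (hpt : IsRecip p pt np)
    (hp2 : Summable fun n : ℤ => (n : ℝ) ^ 2 * p n) :
    (∀ lam : ℝ, 0 ≤ lam → (∀ n : ℤ, 0 ≤ conv (poisson lam) pt n) →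
      variance p ≤ lam) ∧
    (∀ lam : ℝ, 0 ≤ lam → (∀ n : ℤ, 0 ≤ conv p (poisson (-lam)) n) →
      lam ≤ variance p) ∧
    ENNReal.ofReal (4 * variance p) ≤ Fmax pt ∧
    Fmin p ≤ ENNReal.ofReal (4 * variance p) := by
  obtain ⟨hp0, hp1⟩ := hp
  obtain ⟨hnp, hptlow, hconv⟩ := hpt
  have hptb : SuppBelow pt := ⟨-np, hptlow⟩
  have hdelta : conv pt p = (fun n : ℤ => if n = 0 then (1:ℝ) else 0) := funext hconv
  have hp2' : Summable fun n : ℤ => (n : ℝ) ^ 2 * p n := hp2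
  have part1 : ∀ lam : ℝ, 0 ≤ lam → (∀ n : ℤ, 0 ≤ conv (poisson lam) pt n) →
      variance p ≤ lam := by
    intro lam hl hpos
    have hPb : SuppBelow (poisson lam) := poisson_suppBelow lam
    set r := conv (poisson lam) pt with hrdef
    have hrb : SuppBelow r := suppBelow_conv hPb hptb
    have hrp : conv r p = poisson lam := by
      rw [hrdef, conv_assoc hPb hptb hpb, hdelta, conv_delta]
    have hpnp : 0 < p np := hnp.1
    have hble : ∀ n : ℤ, r n ≤ (p np)⁻¹ * poisson lam (n + np) := by
      intro n
      have h := conv_le hrb hpb hpos hp0 (n + np) n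
      rw [show n + np - n = np by ring, hrp] at h
      rw [inv_mul_eq_div, le_div_iff₀ hpnp]
      exact h
    obtain ⟨hrS, hr2⟩ := moment_summable_of_le hpos ((p np)⁻¹) np hble
      (poisson_hasSum lam).summable (poisson_hasSum_sq lam).summable
    have hr1 : HasSum r 1 := by
      have hF : HasSum (fun q : ℤ × ℤ => r q.1 * p q.2) ((∑' n, r n) * 1) :=
        hrS.hasSum.mul hp1 (prodsum (summable_abs_iff.mpr hrS)
          (summable_abs_iff.mpr hp1.summable))
      have h1 := hasSum_mul_conv (f := fun _ => 1) (hF.congr_fun fun q => one_mul _)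
      have h2 : HasSum (fun n : ℤ => 1 * conv r p n) 1 :=
        (poisson_hasSum lam).congr_fun fun n => by rw [one_mul, hrp]
      have heq := h1.unique h2
      rw [mul_one] at heq
      rw [← heq]
      exact hrS.hasSum
    obtain ⟨hs1, hmeaneq, hvareq⟩ := conv_stats hpos hp0 hr1 hp1 hr2 hp2'
    rw [hrp, variance_poisson] at hvareq
    have hvr : 0 ≤ variance r := tsum_nonneg fun n => mul_nonneg (sq_nonneg _) (hpos n)
    linarith
  have part2 : ∀ lam : ℝ, 0 ≤ lam → (∀ n : ℤ, 0 ≤ conv p (poisson (-lam)) n) →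
      lam ≤ variance p := by
    intro lam hl hpos
    set s := conv p (poisson (-lam)) with hsdef
    have hsb : SuppBelow s := suppBelow_conv hpb (poisson_suppBelow _)
    have hsP : conv s (poisson lam) = p := by
      rw [hsdef, conv_assoc hpb (poisson_suppBelow _) (poisson_suppBelow _), poisson_conv,
        show -lam + lam = 0 by ring, poisson_zero, conv_delta]
    have hP0 : poisson lam 0 = Real.exp (-lam) := by simp [poisson]
    have hble : ∀ n : ℤ, s n ≤ (Real.exp (-lam))⁻¹ * p (n + 0) := by
      intro n
      have h := conv_le hsb (poisson_suppBelow lam) hpos (poisson_nonneg hl) n n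
      rw [sub_self, hP0, hsP] at h
      rw [add_zero, inv_mul_eq_div, le_div_iff₀ (Real.exp_pos _)]
      exact h
    obtain ⟨hsS, hs2⟩ := moment_summable_of_le hpos ((Real.exp (-lam))⁻¹) 0 hble
      hp1.summable hp2'
    have hs1 : HasSum s 1 := by
      have hF : HasSum (fun q : ℤ × ℤ => s q.1 * poisson lam q.2) ((∑' n, s n) * 1) :=
        hsS.hasSum.mul (poisson_hasSum lam) (prodsum (summable_abs_iff.mpr hsS)
          (summable_abs_iff.mpr (poisson_hasSum lam).summable))
      have h1 := hasSum_mul_conv (f := fun _ => 1) (hF.congr_fun fun q => one_mul _)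
      have h2 : HasSum (fun n : ℤ => 1 * conv s (poisson lam) n) 1 :=
        hp1.congr_fun fun n => by rw [one_mul, hsP]
      have heq := h1.unique h2
      rw [mul_one] at heq
      rw [← heq]
      exact hsS.hasSum
    obtain ⟨hq1, hmeaneq, hvareq⟩ := conv_stats hpos (poisson_nonneg hl) hs1
      (poisson_hasSum lam) hs2 (poisson_hasSum_sq lam).summable
    rw [hsP, variance_poisson] at hvareq
    have hvs : 0 ≤ variance s := tsum_nonneg fun n => mul_nonneg (sq_nonneg _) (hpos n)
    linarith
  refine ⟨part1, part2, ?_, ?_⟩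
  · unfold Fmax
    apply le_sInf
    rintro x ⟨lam, hl, hpos, rfl⟩
    exact ENNReal.ofReal_le_ofReal (by linarith [part1 lam hl hpos])
  · unfold Fmin
    apply sSup_le
    rintro x ⟨lam, hl, hpos, rfl⟩
    exact ENNReal.ofReal_le_ofReal (by linarith [part2 lam hl hpos])
end

section
/- Achievability above and below the QFI thresholds: let p be a supported-below probability distribution on ℤ. (i) If F_max(p) < ∞, then for every λ ≥ 0 with 4λ > F_max(p) one has P_λ ≻_a p. (ii) If F_min(p) > 0, then for every σ with F_min(p) > 4σ ≥ 0 one has p ≻_a P_σ. -/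
lemma poisson_neg_s14 {c : ℝ} {m : ℤ} (h : m < 0) : poisson c m = 0 := by
  simp [poisson, not_le.mpr h]

lemma poisson_coe (c : ℝ) (N : ℕ) :
    poisson c (N : ℤ) = Real.exp (-c) * c ^ N / (Nat.factorial N : ℝ) := by
  simp [poisson]

lemma poisson_nonneg_s14 {c : ℝ} (hc : 0 ≤ c) (m : ℤ) : 0 ≤ poisson c m := by
  unfold poisson
  split
  · positivity
  · exact le_refl 0

lemma conv_comm (a b : ℤ → ℝ) (n : ℤ) : conv a b n = conv b a n := by
  unfold conv
  have := (Equiv.subLeft n).tsum_eq (fun k => a k * b (n - k))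
  rw [← this]
  apply tsum_congr
  intro k
  simp [Equiv.subLeft, sub_sub_cancel, mul_comm]

lemma conv_eq_sum (a b : ℤ → ℝ) (A : ℤ) (ha : ∀ m, m < A → a m = 0)
    (hb : ∀ m, m < 0 → b m = 0) (n : ℤ) :
    conv a b n = ∑ k ∈ Finset.Icc A n, a k * b (n - k) := by
  apply tsum_eq_sum
  intro k hk
  rw [Finset.mem_Icc] at hk
  push_neg at hk
  rcases lt_or_ge k A with h | h
  · rw [ha k h, zero_mul]
  · rw [hb (n - k) (by omega), mul_zero]

lemma poisson_nat_s14 (x y : ℝ) (N : ℕ) :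
    Real.exp (-(x+y)) * (x+y)^N / (Nat.factorial N : ℝ)
      = ∑ j ∈ Finset.range (N+1),
        (Real.exp (-x) * x^j / (Nat.factorial j : ℝ)) *
        (Real.exp (-y) * y^(N-j) / (Nat.factorial (N-j) : ℝ)) := by
  rw [add_pow, Finset.mul_sum, Finset.sum_div]
  apply Finset.sum_congr rfl
  intro j hj
  have hjN : j ≤ N := Nat.lt_succ_iff.mp (Finset.mem_range.mp hj)
  have hfac : (Nat.choose N j : ℝ) * (Nat.factorial j : ℝ) * (Nat.factorial (N-j) : ℝ)
      = (Nat.factorial N : ℝ) := by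
    exact_mod_cast congrArg (Nat.cast : ℕ → ℝ) (Nat.choose_mul_factorial_mul_factorial hjN)
  have h1 : Real.exp (-(x+y)) = Real.exp (-x) * Real.exp (-y) := by
    rw [← Real.exp_add]; ring_nf
  have hj0 : (Nat.factorial j : ℝ) ≠ 0 := by positivity
  have hNj0 : (Nat.factorial (N-j) : ℝ) ≠ 0 := by positivity
  have hN0 : (Nat.factorial N : ℝ) ≠ 0 := by positivity
  rw [h1]
  field_simp
  rw [← hfac]
  ring

lemma sum_Icc_int (g : ℤ → ℝ) (N : ℕ) :
    ∑ j ∈ Finset.Icc (0:ℤ) (N:ℤ), g j = ∑ i ∈ Finset.range (N+1), g (i:ℤ) := by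
  have h : Finset.Icc (0:ℤ) (N:ℤ)
      = (Finset.range (N+1)).map ⟨Nat.cast, Nat.cast_injective⟩ := by
    ext x
    simp only [Finset.mem_Icc, Finset.mem_map, Finset.mem_range, Function.Embedding.coeFn_mk]
    constructor
    · intro hx; exact ⟨x.toNat, by omega, by omega⟩
    · rintro ⟨a, ha, rfl⟩; omega
  rw [h, Finset.sum_map]
  rfl

lemma poisson_add (x y : ℝ) (m : ℤ) :
    poisson (x+y) m = ∑ j ∈ Finset.Icc (0:ℤ) m, poisson x j * poisson y (m-j) := by
  rcases lt_or_ge m 0 with h | h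
  · rw [Finset.Icc_eq_empty (by omega), Finset.sum_empty, poisson_neg_s14 h]
  · obtain ⟨N, rfl⟩ : ∃ N : ℕ, m = (N:ℤ) := ⟨m.toNat, (Int.toNat_of_nonneg h).symm⟩
    rw [sum_Icc_int, poisson_coe, poisson_nat_s14 x y N]
    apply Finset.sum_congr rfl
    intro i hi
    have hiN : i ≤ N := Nat.lt_succ_iff.mp (Finset.mem_range.mp hi)
    rw [poisson_coe, show (N:ℤ) - (i:ℤ) = ((N - i : ℕ) : ℤ) by omega, poisson_coe]

lemma key (a : ℤ → ℝ) (A : ℤ) (ha : ∀ m, m < A → a m = 0) (x y : ℝ) (hx : 0 ≤ x)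
    (hpos : ∀ n, 0 ≤ conv a (poisson y) n) (n : ℤ) : 0 ≤ conv a (poisson (x+y)) n := by
  have hpy : ∀ m : ℤ, m < 0 → poisson y m = 0 := fun m hm => poisson_neg_s14 hm
  have hpxy : ∀ m : ℤ, m < 0 → poisson (x+y) m = 0 := fun m hm => poisson_neg_s14 hm
  rw [conv_eq_sum a _ A ha hpxy n]
  have step1 : ∀ k ∈ Finset.Icc A n,
      a k * poisson (x+y) (n-k)
        = ∑ j ∈ Finset.Icc (0:ℤ) (n - A), a k * (poisson x j * poisson y (n-k-j)) := by
    intro k hk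
    rw [Finset.mem_Icc] at hk
    rw [poisson_add, Finset.mul_sum]
    apply Finset.sum_subset (Finset.Icc_subset_Icc_right (by omega))
    intro j hj hj'
    rw [Finset.mem_Icc] at hj
    rw [Finset.mem_Icc] at hj'
    push_neg at hj'
    have := hj' hj.1
    rw [hpy (n-k-j) (by omega), mul_zero, mul_zero]
  rw [Finset.sum_congr rfl step1, Finset.sum_comm]
  apply Finset.sum_nonneg
  intro j hj
  rw [Finset.mem_Icc] at hj
  have hkey : ∑ k ∈ Finset.Icc A n, a k * (poisson x j * poisson y (n - k - j))
      = poisson x j * conv a (poisson y) (n - j) := by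
    rw [conv_eq_sum a _ A ha hpy (n-j), Finset.mul_sum]
    rw [← Finset.sum_subset (Finset.Icc_subset_Icc_right (by omega : n - j ≤ n))]
    · apply Finset.sum_congr rfl
      intro k _
      rw [sub_right_comm]
      ring
    · intro k hk hk'
      rw [Finset.mem_Icc] at hk hk'
      push_neg at hk'
      have := hk' hk.1
      rw [hpy (n - k - j) (by omega), mul_zero, mul_zero]
  rw [hkey]
  exact mul_nonneg (poisson_nonneg_s14 hx j) (hpos _)

/-- achievability above and below the QFI thresholds for a
supported-below probability distribution `p`:
(i) if `F_max(p) < ∞`, then every `λ ≥ 0` with `4λ > F_max(p)` satisfies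
`P_λ ≻_a p`; (ii) if `F_min(p) > 0`, then every `σ` with `F_min(p) > 4σ ≥ 0`
satisfies `p ≻_a P_σ`. -/
theorem qfi_achievability (p pt : ℤ → ℝ) (np : ℤ)
    (hp : IsProbDist p) (hpb : SuppBelow p)
    (hpt : IsRecip p pt np) :
    (Fmax pt ≠ ⊤ →
      ∀ lam : ℝ, 0 ≤ lam → Fmax pt < ENNReal.ofReal (4 * lam) →
        ∀ n : ℤ, 0 ≤ conv (poisson lam) pt n) ∧
    (0 < Fmin p →
      ∀ sig : ℝ, 0 ≤ sig → ENNReal.ofReal (4 * sig) < Fmin p →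
        ∀ n : ℤ, 0 ≤ conv p (poisson (-sig)) n) := by
  constructor
  · intro _ lam _ hlt n
    unfold Fmax at hlt
    rw [sInf_lt_iff] at hlt
    obtain ⟨x, ⟨mu, hmu0, hmuconv, rfl⟩, hxlt⟩ := hlt
    have hpos4 : (0:ℝ) < 4 * lam := by
      by_contra hh
      push_neg at hh
      rw [ENNReal.ofReal_eq_zero.mpr hh] at hxlt
      exact (not_lt_of_ge zero_le) hxlt
    have h4 : 4 * mu < 4 * lam := (ENNReal.ofReal_lt_ofReal_iff hpos4).mp hxlt
    have hA : ∀ m : ℤ, m < -np → pt m = 0 := hpt.2.1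
    have hpos2 : ∀ m, 0 ≤ conv pt (poisson mu) m := fun m => by
      rw [conv_comm]; exact hmuconv m
    have hk := key pt (-np) hA (lam - mu) mu (by linarith) hpos2 n
    rw [show lam - mu + mu = lam by ring] at hk
    rw [conv_comm]
    exact hk
  · intro _ sig hs hlt n
    unfold Fmin at hlt
    rw [lt_sSup_iff] at hlt
    obtain ⟨x, ⟨mu, hmu0, hmuconv, rfl⟩, hxlt⟩ := hlt
    have h4 : 4 * sig < 4 * mu :=
      (ENNReal.ofReal_lt_ofReal_iff_of_nonneg (by linarith)).mp hxlt
    obtain ⟨N, hN⟩ := hpb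
    have hk := key p N hN (mu - sig) (-mu) (by linarith) hmuconv n
    rw [show mu - sig + -mu = -sig by ring] at hk
    exact hk
end
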